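/- If a sequence $(b_n)$ in a semigroup satisfies, for every $n$, $FS(b_1,\dots,b_n) \cap (FS(b_1,\dots,b_n) + b_{n+1}) = \emptyset$, and $(b_n)$ is proper, then $b_F \neq b_G$ for all disjoint finite nonempty index sets $F$ and $G$. -/

import Mathlib

def ordsum {S : Type*} [AddSemigroup S] (a : ℕ → S) (F : Finset ℕ) : S :=
  match F.sort (· ≤ ·) with
  | [] => a 0
  | i :: l => l.foldl (fun s j => s + a j) (a i)

def FinsetLT (F G : Finset ℕ) : Prop := ∀ i ∈ F, ∀ j ∈ G, i < j

def FSset {S : Type*} [AddSemigroup S] (a : ℕ → S) : Set S :=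
  {s | ∃ F : Finset ℕ, F.Nonempty ∧ ordsum a F = s}

def FStail {S : Type*} [AddSemigroup S] (a : ℕ → S) (n : ℕ) : Set S :=
  {s | ∃ F : Finset ℕ, F.Nonempty ∧ (∀ i ∈ F, n ≤ i) ∧ ordsum a F = s}

def IsProperSeq {S : Type*} [AddSemigroup S] (a : ℕ → S) : Prop :=
  ∀ F G : Finset ℕ, F.Nonempty → G.Nonempty → FinsetLT F G →
    ordsum a F ≠ ordsum a G

def IsSumseq {S : Type*} [AddSemigroup S] (a b : ℕ → S) : Prop :=
  ∃ F : ℕ → Finset ℕ, (∀ k, (F k).Nonempty) ∧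
    (∀ k, FinsetLT (F k) (F (k + 1))) ∧ (∀ k, b k = ordsum a (F k))

def IsProperIP {S : Type*} [AddSemigroup S] (A : Set S) : Prop :=
  ∃ b : ℕ → S, Function.Injective b ∧ FSset b ⊆ A

def ProperIPPartReg (S : Type*) [AddSemigroup S] : Prop :=
  ∀ A : Set S, IsProperIP A → ∀ (k : ℕ) (c : S → Fin k),
    ∃ i : Fin k, IsProperIP {s ∈ A | c s = i}

def FSfin {S : Type*} [AddSemigroup S] (a : ℕ → S) (n : ℕ) : Set S :=
  {s | ∃ F : Finset ℕ, F.Nonempty ∧ F ⊆ Finset.range n ∧ ordsum a F = s}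

def FS2set {S : Type*} [AddSemigroup S] (a : ℕ → S) : Set S :=
  {s | ∃ F : Finset ℕ, 2 ≤ F.card ∧ ordsum a F = s}

lemma sort_append_max {m : ℕ} {F : Finset ℕ} (h : ∀ i ∈ F, i < m) (hm : m ∉ F) :
    (insert m F).sort (· ≤ ·) = F.sort (· ≤ ·) ++ [m] := by
  refine (fun h1 h2 h3 => List.Perm.eq_of_pairwise' (r := (· ≤ ·)) h2 h3 h1) ?_ ?_ ?_
  · refine ((insert m F).sort_perm_toList _).trans ?_
    refine (List.Perm.trans ?_ (List.perm_append_singleton _ _).symm)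
    have : (insert m F).toList.Perm (m :: F.toList) := Finset.toList_insert hm
    exact this.trans (List.Perm.cons m ((F.sort_perm_toList _).symm))
  · exact Finset.pairwise_sort _ _
  · rw [List.pairwise_append]
    refine ⟨Finset.pairwise_sort _ _, List.pairwise_singleton _ m, ?_⟩
    intro x hx y hy
    rw [List.mem_singleton] at hy
    subst hy
    exact le_of_lt (h x ((Finset.mem_sort _).mp hx))

lemma ordsum_insert_max {S : Type*} [AddSemigroup S] (a : ℕ → S) {m : ℕ} {F : Finset ℕ}
    (hF : F.Nonempty) (h : ∀ i ∈ F, i < m) :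
    ordsum a (insert m F) = ordsum a F + a m := by
  have hm : m ∉ F := fun hmem => lt_irrefl m (h m hmem)
  unfold ordsum
  rw [sort_append_max h hm]
  rcases hs : F.sort (· ≤ ·) with _ | ⟨i, l⟩
  · exfalso
    have hlen := Finset.length_sort (α := ℕ) (· ≤ ·) (s := F)
    rw [hs] at hlen
    simp at hlen
    exact hF.ne_empty (Finset.card_eq_zero.mp hlen.symm)
  · simp [List.foldl_append]

theorem stmt12 {S : Type*} [AddSemigroup S] (b : ℕ → S)
    (h2 : ∀ n : ℕ, ∀ x ∈ FSfin b (n + 1), x + b (n + 1) ∉ FSfin b (n + 1))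
    (hp : IsProperSeq b) :
    ∀ F G : Finset ℕ, F.Nonempty → G.Nonempty → Disjoint F G →
      ordsum b F ≠ ordsum b G := by
  -- key: suffices to handle the case max F < max G
  have key : ∀ F G : Finset ℕ, ∀ (hF : F.Nonempty) (hG : G.Nonempty), Disjoint F G →
      (∀ i ∈ F, i < G.max' hG) → ordsum b F ≠ ordsum b G := by
    intro F G hF hG hd hlt
    set m := G.max' hG with hm
    have hm1 : 1 ≤ m := by
      obtain ⟨i, hi⟩ := hF
      have := hlt i hi
      omega
    obtain ⟨n, hn⟩ : ∃ n, m = n + 1 := ⟨m - 1, by omega⟩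
    have hFmem : ordsum b F ∈ FSfin b (n + 1) := by
      refine ⟨F, hF, ?_, rfl⟩
      intro i hi
      rw [Finset.mem_range]
      have := hlt i hi; omega
    by_cases hG' : (G.erase m).Nonempty
    · have hGsplit : ordsum b G = ordsum b (G.erase m) + b m := by
        have : G = insert m (G.erase m) := (Finset.insert_erase (G.max'_mem hG)).symm
        conv_lhs => rw [this]
        rw [ordsum_insert_max _ hG']
        intro i hi
        have him := Finset.mem_of_mem_erase hi
        have := G.le_max' i him
        have hne := Finset.ne_of_mem_erase hi
        omega
      have hG'mem : ordsum b (G.erase m) ∈ FSfin b (n + 1) := by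
        refine ⟨G.erase m, hG', ?_, rfl⟩
        intro i hi
        rw [Finset.mem_range]
        have := G.le_max' i (Finset.mem_of_mem_erase hi)
        have hne := Finset.ne_of_mem_erase hi
        omega
      rw [hn] at hG'mem hGsplit
      intro heq
      rw [hGsplit] at heq
      exact h2 n _ hG'mem (by rw [← heq]; exact hFmem)
    · have : G = {m} := by
        rw [Finset.not_nonempty_iff_eq_empty] at hG'
        apply Finset.eq_singleton_iff_unique_mem.mpr
        exact ⟨G.max'_mem hG, fun x hx => by
          by_contra hne
          exact (Finset.eq_empty_iff_forall_notMem.mp hG' x)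
            (Finset.mem_erase.mpr ⟨hne, hx⟩)⟩
      rw [this]
      exact hp F {m} hF ⟨m, Finset.mem_singleton_self m⟩
        (fun i hi j hj => by rw [Finset.mem_singleton] at hj; exact hj ▸ hlt i hi)
  intro F G hF hG hd
  have hmax : F.max' hF ≠ G.max' hG := by
    intro h
    exact (Finset.disjoint_left.mp hd (F.max'_mem hF)) (h ▸ G.max'_mem hG)
  rcases lt_or_gt_of_ne hmax with h | h
  · exact key F G hF hG hd (fun i hi => lt_of_le_of_lt (F.le_max' i hi) h)
  · exact (key G F hG hF hd.symm (fun i hi => lt_of_le_of_lt (G.le_max' i hi) h)).symm
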